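/- Let Q' be any feasible joint pmf on (𝒳_A × 𝒳_{A^c}) × 𝒴 (Markov chain X_{A^c} — X_A — Y). Fix a map MAP : 𝒳_A → 𝒳_{A^c} with MAP(y_A) ∈ argmax_{x' ∈ 𝒳_{A^c}} P_{X_{A^c}|X_A}(x'|y_A), and define a joint pmf Q by Q(x_A, x_{A^c}, (y_A, y_{A^c})) = Q'_{X Y_A}(x_A, x_{A^c}, y_A) · 1(y_{A^c} = MAP(y_A)), where Q'_{X Y_A} is the marginal of Q' on (𝒳_A × 𝒳_{A^c}) × 𝒳_A obtained by summing out y_{A^c}. Then Q is feasible, Q satisfies the longer Markov chain X_{A^c} — X_A — Y_A — Y_{A^c} (i.e., under Q each of X_{A^c} — X_A — (Y_A, Y_{A^c}) and (X_A, X_{A^c}) — Y_A — Y_{A^c} holds), and E_Q[1(X ≠ Y)] ≤ E_{Q'}[1(X ≠ Y)]. -/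

import Mathlib

set_option maxHeartbeats 1000000


noncomputable section

/-- A probability mass function on a finite type. -/
def IsPMF {T : Type*} [Fintype T] (p : T → ℝ) : Prop :=
  (∀ t, 0 ≤ p t) ∧ ∑ t, p t = 1

/-- Mutual information of a joint pmf `Q` on a product of two finite types;
terms with `Q p = 0` vanish since `0 * log _ = 0`. -/
def mutInfo {α β : Type*} [Fintype α] [Fintype β] (Q : α × β → ℝ) : ℝ :=
  ∑ p : α × β, Q p * Real.log (Q p / ((∑ b, Q (p.1, b)) * (∑ a, Q (a, p.2))))

variable {XA XAc Y : Type*} [Fintype XA] [Fintype XAc] [Fintype Y]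

/-- The `𝒳_A`-marginal of `P`. -/
def margXA (P : XA × XAc → ℝ) (xa : XA) : ℝ := ∑ x', P (xa, x')

/-- Conditional pmf `P_{X_{A^c}|X_A}(x'|xa)`. -/
def condP (P : XA × XAc → ℝ) (x' : XAc) (xa : XA) : ℝ := P (xa, x') / margXA P xa

/-- The modified distortion measure `d_A`. -/
def dA (P : XA × XAc → ℝ) (d : XA × XAc → Y → ℝ) (xa : XA) (y : Y) : ℝ :=
  ∑ x', condP P x' xa * d (xa, x') y

/-- Feasible joint pmfs: a pmf whose `(𝒳_A × 𝒳_{A^c})`-marginal equals `P` and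
satisfying the Markov chain `X_{A^c} — X_A — Y`, i.e.
`Q(x_A,x_{A^c},y) ⬝ Q_{X_A}(x_A) = P(x_A,x_{A^c}) ⬝ Q_{X_A Y}(x_A,y)`. -/
def Feasible (P : XA × XAc → ℝ) (Q : (XA × XAc) × Y → ℝ) : Prop :=
  IsPMF Q ∧ (∀ x, ∑ y, Q (x, y) = P x) ∧
    ∀ xa x' y, Q ((xa, x'), y) * (∑ x'', ∑ y', Q ((xa, x''), y')) =
      P (xa, x') * (∑ x'', Q ((xa, x''), y))

/-- Expected distortion of `Q`. -/
def expDist (d : XA × XAc → Y → ℝ) (Q : (XA × XAc) × Y → ℝ) : ℝ :=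
  ∑ p : (XA × XAc) × Y, Q p * d p.1 p.2

/-- Marginal of `Q` on `(X_A, Y)`. -/
def margAY (Q : (XA × XAc) × Y → ℝ) : XA × Y → ℝ :=
  fun p => ∑ x', Q ((p.1, x'), p.2)

variable [DecidableEq XA] [DecidableEq XAc]

/-- The probability-of-error distortion measure on `𝒴 = 𝒳_A × 𝒳_{A^c}`. -/
def dErr : XA × XAc → XA × XAc → ℝ := fun x y => if x = y then 0 else 1

/-- `α(x_A) = max_{x' ∈ 𝒳_{A^c}} P_{X_{A^c}|X_A}(x'|x_A)`. -/
def alphaF [Nonempty XAc] (P : XA × XAc → ℝ) (xa : XA) : ℝ :=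
  Finset.univ.sup' Finset.univ_nonempty (fun x' => condP P x' xa)

/-- The fixed-set sampling rate distortion function `R_A(Δ)` for the
probability-of-error distortion. -/
def RAerr (P : XA × XAc → ℝ) (Δ : ℝ) : ℝ :=
  sInf {r | ∃ Q : (XA × XAc) × (XA × XAc) → ℝ,
    Feasible P Q ∧ expDist dErr Q ≤ Δ ∧ mutInfo (margAY Q) = r}

/-- The joint pmf `Q` built from `Q'` by replacing the `Y_{A^c}`-component with the
MAP estimate of `X_{A^c}` from `Y_A`:
`Q(x_A, x_{A^c}, (y_A, y_{A^c})) = Q'_{X Y_A}(x_A, x_{A^c}, y_A) 1(y_{A^c} = MAP(y_A))`. -/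
def mapQ (Q' : (XA × XAc) × (XA × XAc) → ℝ) (MAP : XA → XAc) :
    (XA × XAc) × (XA × XAc) → ℝ :=
  fun p => (∑ y', Q' (p.1, (p.2.1, y'))) * (if p.2.2 = MAP p.2.1 then 1 else 0)

/-- the MAP-modified pmf `Q` is feasible, satisfies the longer Markov
chain `X_{A^c} — X_A — Y_A — Y_{A^c}`, and has no larger expected probability of error. -/
theorem stmt4 [Nonempty XA] [Nonempty XAc]
    (P : XA × XAc → ℝ) (hP : IsPMF P) (hfull : ∀ x, 0 < P x)
    (Q' : (XA × XAc) × (XA × XAc) → ℝ) (hQ' : Feasible P Q')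
    (MAP : XA → XAc) (hMAP : ∀ ya x', condP P x' ya ≤ condP P (MAP ya) ya) :
    Feasible P (mapQ Q' MAP) ∧
    (∀ (x : XA × XAc) (ya : XA) (yac : XAc),
      mapQ Q' MAP (x, (ya, yac)) * (∑ x'' : XA × XAc, ∑ y2, mapQ Q' MAP (x'', (ya, y2))) =
        (∑ y2, mapQ Q' MAP (x, (ya, y2))) * (∑ x'' : XA × XAc, mapQ Q' MAP (x'', (ya, yac)))) ∧
    expDist dErr (mapQ Q' MAP) ≤ expDist dErr Q' := by
  obtain ⟨⟨hnn, hsum⟩, hmarg, hmk⟩ := hQ'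
  have hSpos : ∀ xa : XA, 0 < margXA P xa := fun xa =>
    Finset.sum_pos (fun _ _ => hfull _) Finset.univ_nonempty
  -- total mass over x'' and all y of Q'((xa,x''),·) equals margXA P xa
  have hS : ∀ xa : XA, (∑ x'' : XAc, ∑ y' : XA × XAc, Q' ((xa, x''), y')) = margXA P xa := by
    intro xa; simp [margXA, hmarg]
  -- sum over yac of mapQ removes the indicator
  have hsumyac : ∀ (x : XA × XAc) (ya : XA),
      (∑ yac, mapQ Q' MAP (x, (ya, yac))) = ∑ y', Q' (x, (ya, y')) := by
    intro x ya
    simp [mapQ, mul_ite, mul_one, mul_zero, Finset.sum_ite_eq']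
  have hmargQ : ∀ x : XA × XAc, (∑ y, mapQ Q' MAP (x, y)) = P x := by
    intro x
    rw [Fintype.sum_prod_type]
    calc (∑ ya, ∑ yac, mapQ Q' MAP (x, (ya, yac)))
        = ∑ ya, ∑ y', Q' (x, (ya, y')) := by
          exact Finset.sum_congr rfl fun ya _ => hsumyac x ya
      _ = ∑ y, Q' (x, y) := by rw [Fintype.sum_prod_type]
      _ = P x := hmarg x
  have hP2 : ∀ xa x', P (xa, x') ≤ P (xa, MAP xa) := by
    intro xa x'
    have h := hMAP xa x'
    unfold condP at h
    exact (div_le_div_iff_of_pos_right (hSpos xa)).mp h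
  -- Markov identity for Q' in divided form
  have hmk' : ∀ xa x' y, Q' ((xa, x'), y) * margXA P xa =
      P (xa, x') * (∑ x'', Q' ((xa, x''), y)) := by
    intro xa x' y
    have := hmk xa x' y
    rwa [hS xa] at this
  refine ⟨⟨⟨?_, ?_⟩, hmargQ, ?_⟩, ?_, ?_⟩
  · -- nonneg
    intro p
    exact mul_nonneg (Finset.sum_nonneg fun _ _ => hnn _) (by positivity)
  · -- sums to 1
    calc (∑ p : (XA × XAc) × (XA × XAc), mapQ Q' MAP p)
        = ∑ x : XA × XAc, ∑ y, mapQ Q' MAP (x, y) := by rw [Fintype.sum_prod_type]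
      _ = ∑ x : XA × XAc, P x := Finset.sum_congr rfl fun x _ => hmargQ x
      _ = 1 := hP.2
  · -- short Markov chain for mapQ
    intro xa x' y
    have htot : (∑ x'' : XAc, ∑ y', mapQ Q' MAP ((xa, x''), y')) = margXA P xa := by
      simp only [hmargQ]; rfl
    rw [htot]
    obtain ⟨ya, yac⟩ := y
    have hrhs : (∑ x'' : XAc, mapQ Q' MAP ((xa, x''), (ya, yac))) =
        (∑ x'' : XAc, ∑ y', Q' ((xa, x''), (ya, y'))) * (if yac = MAP ya then 1 else 0) := by
      rw [Finset.sum_mul]; rfl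
    rw [hrhs]
    show (∑ y', Q' ((xa, x'), (ya, y'))) * (if yac = MAP ya then 1 else 0) * margXA P xa = _
    by_cases h : yac = MAP ya
    · rw [if_pos h, mul_one, mul_one, Finset.sum_mul]
      calc (∑ y', Q' ((xa, x'), (ya, y')) * margXA P xa)
          = ∑ y', P (xa, x') * (∑ x'', Q' ((xa, x''), (ya, y'))) :=
            Finset.sum_congr rfl fun y' _ => hmk' xa x' (ya, y')
        _ = P (xa, x') * ∑ y', ∑ x'', Q' ((xa, x''), (ya, y')) := by
            rw [Finset.mul_sum]
        _ = P (xa, x') * ∑ x'', ∑ y', Q' ((xa, x''), (ya, y')) := by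
            rw [Finset.sum_comm]
    · simp [h]
  · -- long Markov chain
    intro x ya yac
    have h1 : ∀ x'' : XA × XAc, (∑ y2, mapQ Q' MAP (x'', (ya, y2))) =
        ∑ y', Q' (x'', (ya, y')) := fun x'' => hsumyac x'' ya
    simp only [h1]
    show (∑ y', Q' (x, (ya, y'))) * (if yac = MAP ya then 1 else 0) * _ =
        _ * ∑ x'' : XA × XAc, (∑ y', Q' (x'', (ya, y'))) * (if yac = MAP ya then 1 else 0)
    rw [← Finset.sum_mul]
    ring
  · -- expected distortion
    have hdiag : ∀ R : (XA × XAc) × (XA × XAc) → ℝ, (∀ p, 0 ≤ R p) →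
        (∑ p : (XA × XAc) × (XA × XAc), R p) = 1 →
        expDist dErr R = 1 - ∑ x : XA × XAc, R (x, x) := by
      intro R _ h1
      unfold expDist dErr
      have : ∀ p : (XA × XAc) × (XA × XAc),
          R p * (if p.1 = p.2 then 0 else 1) = R p - (if p.1 = p.2 then R p else 0) := by
        intro p; by_cases h : p.1 = p.2 <;> simp [h]
      rw [Finset.sum_congr rfl fun p _ => this p, Finset.sum_sub_distrib, h1]
      congr 1
      rw [Fintype.sum_prod_type]
      congr 1
      funext x
      show (∑ x1 : XA × XAc, if x = x1 then R (x, x1) else 0) = R (x, x)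
      simp only [Finset.sum_ite_eq, Finset.mem_univ, if_true]
    have hQnn : ∀ p, 0 ≤ mapQ Q' MAP p :=
      fun p => mul_nonneg (Finset.sum_nonneg fun _ _ => hnn _) (by positivity)
    have hQsum : (∑ p : (XA × XAc) × (XA × XAc), mapQ Q' MAP p) = 1 := by
      calc (∑ p : (XA × XAc) × (XA × XAc), mapQ Q' MAP p)
          = ∑ x : XA × XAc, ∑ y, mapQ Q' MAP (x, y) := by rw [Fintype.sum_prod_type]
        _ = ∑ x : XA × XAc, P x := Finset.sum_congr rfl fun x _ => hmargQ x
        _ = 1 := hP.2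
    rw [hdiag _ hnn hsum, hdiag _ hQnn hQsum]
    have key : (∑ x : XA × XAc, Q' (x, x)) ≤ ∑ x : XA × XAc, mapQ Q' MAP (x, x) := by
      have hdQ : (∑ x : XA × XAc, mapQ Q' MAP (x, x)) =
          ∑ xa : XA, ∑ y', Q' ((xa, MAP xa), (xa, y')) := by
        rw [Fintype.sum_prod_type]
        refine Finset.sum_congr rfl fun xa _ => ?_
        simp [mapQ, mul_ite, mul_one, mul_zero, Finset.sum_ite_eq']
      have hdQ' : (∑ x : XA × XAc, Q' (x, x)) =
          ∑ xa : XA, ∑ x' : XAc, Q' ((xa, x'), (xa, x')) := by rw [Fintype.sum_prod_type]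
      rw [hdQ, hdQ']
      refine Finset.sum_le_sum fun xa _ => ?_
      -- per-xa comparison, multiply by margXA P xa
      have hpos := hSpos xa
      rw [← mul_le_mul_iff_of_pos_right hpos, Finset.sum_mul, Finset.sum_mul]
      calc (∑ x' : XAc, Q' ((xa, x'), (xa, x')) * margXA P xa)
          = ∑ x' : XAc, P (xa, x') * (∑ x'', Q' ((xa, x''), (xa, x'))) :=
            Finset.sum_congr rfl fun x' _ => hmk' xa x' (xa, x')
        _ ≤ ∑ x' : XAc, P (xa, MAP xa) * (∑ x'', Q' ((xa, x''), (xa, x'))) := by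
            refine Finset.sum_le_sum fun x' _ => ?_
            exact mul_le_mul_of_nonneg_right (hP2 xa x')
              (Finset.sum_nonneg fun _ _ => hnn _)
        _ = ∑ x' : XAc, Q' ((xa, MAP xa), (xa, x')) * margXA P xa :=
            Finset.sum_congr rfl fun x' _ => (hmk' xa (MAP xa) (xa, x')).symm
    linarith
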